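/- The 6-dimensional Lie algebra g_{6.10}^{a=0} with nonzero brackets [X₂,X₆] = X₁, [X₃,X₆] = X₂, [X₄,X₆] = -X₅, [X₅,X₆] = X₄ admits an invariant symplectic structure: the 2-form ω = ω₁₆ α¹⁶ + ω₂₃ α²³ + ω₂₆ α²⁶ + ω₃₆ α³⁶ + ω₄₅ α⁴⁵ + ω₄₆ α⁴⁶ + ω₅₆ α⁵⁶ is closed for any coefficients, and it is non-degenerate whenever ω₁₆ ω₂₃ ω₄₅ ≠ 0. -/

import Mathlib

/-!
STATEMENT 13: The Lie algebra g_{6.10}^{a=0} with nonzero brackets [X₂,X₆] = X₁,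
[X₃,X₆] = X₂, [X₄,X₆] = −X₅, [X₅,X₆] = X₄ admits an invariant symplectic structure:
the 2-form ω = ω₁₆α¹⁶ + ω₂₃α²³ + ω₂₆α²⁶ + ω₃₆α³⁶ + ω₄₅α⁴⁵ + ω₄₆α⁴⁶ + ω₅₆α⁵⁶
is closed for any coefficients, and non-degenerate whenever ω₁₆ω₂₃ω₄₅ ≠ 0.

The Chevalley–Eilenberg differential (dα(X,Y) = −α([X,Y]) on 1-forms) is determined by
dα¹ = −α²∧α⁶, dα² = −α³∧α⁶, dα⁴ = −α⁵∧α⁶, dα⁵ = α⁴∧α⁶, dα³ = dα⁶ = 0; the complex is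
modeled concretely below (indices shifted down by one).  Non-degeneracy of ω is
expressed as invertibility (nonzero determinant) of its Gram matrix, which for a 2-form
on a 6-dimensional space is equivalent to ω ∧ ω ∧ ω ≠ 0.
-/

open Finset Module

/-- The exterior algebra on six degree-one generators α¹,…,α⁶, as coordinates on the
basis of increasing wedge monomials indexed by subsets of `Fin 6`. -/
abbrev Lam : Type := Finset (Fin 6) → ℝ

/-- The basis monomial α^S. -/
noncomputable def gen (S : Finset (Fin 6)) : Lam := Pi.single S 1

/-- Koszul sign when interleaving (the increasing enumerations of) `T` and `U`:
(−1) to the number of inversions. -/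
def koszulSign (T U : Finset (Fin 6)) : ℝ :=
  (-1 : ℝ) ^ (((T ×ˢ U).filter fun p => p.2 < p.1).card)

/-- The wedge (exterior) product in coordinates. -/
noncomputable def wedge (f h : Lam) : Lam := fun S =>
  ∑ T ∈ S.powerset, koszulSign T (S \ T) * f T * h (S \ T)

/-- The Chevalley–Eilenberg differential: the unique antiderivation with dαⁱ = g i,
given on the basis monomial α^S by d α^S = Σ_{i ∈ S} (−1)^{#{j ∈ S | j < i}} (g i) ∧ α^{S∖i}. -/
noncomputable def ceDiff (g : Fin 6 → Lam) : Lam →ₗ[ℝ] Lam :=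
  (Pi.basisFun ℝ (Finset (Fin 6))).constr ℝ fun S =>
    ∑ i ∈ S, ((-1 : ℝ) ^ ((S.filter fun j => j < i).card)) • wedge (g i) (gen (S.erase i))

/-- The subspace Λᵏ of homogeneous elements of degree `k`. -/
def degSub (k : ℕ) : Submodule ℝ Lam where
  carrier := {f | ∀ S : Finset (Fin 6), S.card ≠ k → f S = 0}
  add_mem' := by
    intro f g hf hg S hS
    simp only [Pi.add_apply, hf S hS, hg S hS, add_zero]
  zero_mem' := by intro S hS; rfl
  smul_mem' := by
    intro c f hf S hS
    simp only [Pi.smul_apply, hf S hS, smul_zero]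

/-- Closed k-forms. -/
noncomputable def Zspace (D : Lam →ₗ[ℝ] Lam) (k : ℕ) : Submodule ℝ Lam :=
  degSub k ⊓ LinearMap.ker D

/-- Exact k-forms (the image of the (k−1)-forms under the differential). -/
noncomputable def Bspace (D : Lam →ₗ[ℝ] Lam) (k : ℕ) : Submodule ℝ Lam :=
  (degSub (k - 1)).map D

/-- The Gram matrix of a 2-form ω: the antisymmetric matrix (ω(Xᵢ,Xⱼ))ᵢⱼ.  A 2-form on a
6-dimensional space is non-degenerate (equivalently ω ∧ ω ∧ ω ≠ 0) iff this matrix is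
invertible, i.e. has nonzero determinant. -/
noncomputable def gram (f : Lam) : Matrix (Fin 6) (Fin 6) ℝ :=
  Matrix.of fun i j => if i < j then f {i, j} else if j < i then -(f {j, i}) else 0


/-- Generator differentials of g_{6.10}^{a=0} (0-indexed). -/
noncomputable def gDiff : Fin 6 → Lam :=
  ![-gen {1, 5}, -gen {2, 5}, 0, -gen {4, 5}, gen {3, 5}, 0]


lemma ceDiff_gen (g : Fin 6 → Lam) (S : Finset (Fin 6)) :
    ceDiff g (gen S) =
      ∑ i ∈ S, ((-1 : ℝ) ^ ((S.filter fun j => j < i).card)) • wedge (g i) (gen (S.erase i)) := by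
  rw [ceDiff, show gen S = Pi.basisFun ℝ (Finset (Fin 6)) S by simp [gen], Basis.constr_basis]

lemma wedge_zero_left (h : Lam) : wedge 0 h = 0 := by
  funext S; simp [wedge]

lemma wedge_neg_left (f h : Lam) : wedge (-f) h = -(wedge f h) := by
  funext S; simp [wedge, mul_neg, neg_mul, Finset.sum_neg_distrib]

lemma wedge_gen_overlap (A B : Finset (Fin 6)) (hx : ¬ Disjoint A B) :
    wedge (gen A) (gen B) = 0 := by
  funext S
  rw [wedge]
  apply Finset.sum_eq_zero
  intro T hT
  rcases eq_or_ne T A with rfl | hne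
  · rcases eq_or_ne (S \ T) B with hSB | hne2
    · exact absurd (hSB ▸ Finset.disjoint_sdiff) hx
    · simp [gen, Pi.single_apply, hne2]
  · simp [gen, Pi.single_apply, hne]

lemma d05 : ceDiff gDiff (gen {0,5}) = 0 := by
  rw [ceDiff_gen]
  rw [show ({0,5}:Finset (Fin 6)) = insert 0 {5} from rfl, Finset.sum_insert (by decide),
      Finset.sum_singleton]
  rw [(by decide : ({0,5} : Finset (Fin 6)).erase 0 = {5}),
      (by decide : ({0,5} : Finset (Fin 6)).erase 5 = {0})]
  rw [show gDiff 0 = -gen {1,5} from rfl, show gDiff 5 = 0 from rfl]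
  simp [wedge_neg_left, wedge_zero_left, wedge_gen_overlap {1,5} {5} (by decide)]

lemma d12 : ceDiff gDiff (gen {1,2}) = 0 := by
  rw [ceDiff_gen]
  rw [show ({1,2}:Finset (Fin 6)) = insert 1 {2} from rfl, Finset.sum_insert (by decide),
      Finset.sum_singleton]
  rw [(by decide : ({1,2} : Finset (Fin 6)).erase 1 = {2}),
      (by decide : ({1,2} : Finset (Fin 6)).erase 2 = {1})]
  rw [show gDiff 1 = -gen {2,5} from rfl, show gDiff 2 = 0 from rfl]
  simp [wedge_neg_left, wedge_zero_left, wedge_gen_overlap {2,5} {2} (by decide)]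

lemma d15 : ceDiff gDiff (gen {1,5}) = 0 := by
  rw [ceDiff_gen]
  rw [show ({1,5}:Finset (Fin 6)) = insert 1 {5} from rfl, Finset.sum_insert (by decide),
      Finset.sum_singleton]
  rw [(by decide : ({1,5} : Finset (Fin 6)).erase 1 = {5}),
      (by decide : ({1,5} : Finset (Fin 6)).erase 5 = {1})]
  rw [show gDiff 1 = -gen {2,5} from rfl, show gDiff 5 = 0 from rfl]
  simp [wedge_neg_left, wedge_zero_left, wedge_gen_overlap {2,5} {5} (by decide)]

lemma d25 : ceDiff gDiff (gen {2,5}) = 0 := by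
  rw [ceDiff_gen]
  rw [show ({2,5}:Finset (Fin 6)) = insert 2 {5} from rfl, Finset.sum_insert (by decide),
      Finset.sum_singleton]
  rw [(by decide : ({2,5} : Finset (Fin 6)).erase 2 = {5}),
      (by decide : ({2,5} : Finset (Fin 6)).erase 5 = {2})]
  rw [show gDiff 2 = (0:Lam) from rfl, show gDiff 5 = 0 from rfl]
  simp [wedge_neg_left, wedge_zero_left]

lemma d34 : ceDiff gDiff (gen {3,4}) = 0 := by
  rw [ceDiff_gen]
  rw [show ({3,4}:Finset (Fin 6)) = insert 3 {4} from rfl, Finset.sum_insert (by decide),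
      Finset.sum_singleton]
  rw [(by decide : ({3,4} : Finset (Fin 6)).erase 3 = {4}),
      (by decide : ({3,4} : Finset (Fin 6)).erase 4 = {3})]
  rw [show gDiff 3 = -gen {4,5} from rfl, show gDiff 4 = gen {3,5} from rfl]
  simp [wedge_neg_left, wedge_zero_left, wedge_gen_overlap {4,5} {4} (by decide), wedge_gen_overlap {3,5} {3} (by decide)]

lemma d35 : ceDiff gDiff (gen {3,5}) = 0 := by
  rw [ceDiff_gen]
  rw [show ({3,5}:Finset (Fin 6)) = insert 3 {5} from rfl, Finset.sum_insert (by decide),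
      Finset.sum_singleton]
  rw [(by decide : ({3,5} : Finset (Fin 6)).erase 3 = {5}),
      (by decide : ({3,5} : Finset (Fin 6)).erase 5 = {3})]
  rw [show gDiff 3 = -gen {4,5} from rfl, show gDiff 5 = 0 from rfl]
  simp [wedge_neg_left, wedge_zero_left, wedge_gen_overlap {4,5} {5} (by decide)]

lemma d45 : ceDiff gDiff (gen {4,5}) = 0 := by
  rw [ceDiff_gen]
  rw [show ({4,5}:Finset (Fin 6)) = insert 4 {5} from rfl, Finset.sum_insert (by decide),
      Finset.sum_singleton]
  rw [(by decide : ({4,5} : Finset (Fin 6)).erase 4 = {5}),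
      (by decide : ({4,5} : Finset (Fin 6)).erase 5 = {4})]
  rw [show gDiff 4 = gen {3,5} from rfl, show gDiff 5 = 0 from rfl]
  simp [wedge_neg_left, wedge_zero_left, wedge_gen_overlap {3,5} {5} (by decide)]

set_option maxRecDepth 10000 in
set_option maxHeartbeats 4000000 in
theorem symplectic_g610 (c16 c23 c26 c36 c45 c46 c56 : ℝ) :
    ceDiff gDiff (c16 • gen {0, 5} + c23 • gen {1, 2} + c26 • gen {1, 5} +
        c36 • gen {2, 5} + c45 • gen {3, 4} + c46 • gen {3, 5} + c56 • gen {4, 5}) = 0 ∧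
    (c16 * c23 * c45 ≠ 0 →
      (gram (c16 • gen {0, 5} + c23 • gen {1, 2} + c26 • gen {1, 5} +
        c36 • gen {2, 5} + c45 • gen {3, 4} + c46 • gen {3, 5} + c56 • gen {4, 5})).det ≠ 0) := by
  set f : Lam := c16 • gen {0, 5} + c23 • gen {1, 2} + c26 • gen {1, 5} +
        c36 • gen {2, 5} + c45 • gen {3, 4} + c46 • gen {3, 5} + c56 • gen {4, 5} with hf
  constructor
  · simp only [hf, map_add, map_smul, d05, d12, d15, d25, d34, d35, d45, smul_zero, add_zero]
  · intro hne
    have hg : gram f = !![0,0,0,0,0,c16; 0,0,c23,0,0,c26; 0,-c23,0,0,0,c36;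
        0,0,0,0,c45,c46; 0,0,0,-c45,0,c56; -c16,-c26,-c36,-c46,-c56,0] := by
      ext i j
      fin_cases i <;> fin_cases j <;>
        (simp (config := { decide := true }) [hf, gram, gen, Pi.single_apply]) <;> rfl
    rw [hg]
    have hdet : (!![0,0,0,0,0,c16; 0,0,c23,0,0,c26; 0,-c23,0,0,0,c36;
        0,0,0,0,c45,c46; 0,0,0,-c45,0,c56; -c16,-c26,-c36,-c46,-c56,0] :
        Matrix (Fin 6) (Fin 6) ℝ).det = (c16 * c23 * c45)^2 := by
      simp [Matrix.det_succ_row_zero, Fin.sum_univ_succ, Fin.succAbove]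
      ring
    rw [hdet]
    exact pow_ne_zero 2 hne
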